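/- Let k be a field, let (R, m) and (S, n) be standard graded k-algebras with m ≠ (0) and n ≠ (0), let I ⊆ m² and J ⊆ n² be homogeneous ideals, let T = R ⊗_k S, and let F = I + J + mn ⊆ T. Then F = (I + n) ∩ (J + m) as ideals of T. -/

import Mathlib

open TensorProduct

section Aux

variable {k R S : Type*} [Field k] [CommRing R] [Algebra k R] [CommRing S] [Algebra k S]

/-- Multiplication stability of the span of pure tensors `a ⊗ s` with `a ∈ p`. -/
lemma aux_mul_mem_left (p : Ideal R) (t x : R ⊗[k] S)
    (hx : x ∈ Submodule.span k {x : R ⊗[k] S | ∃ a ∈ p, ∃ s : S, x = a ⊗ₜ s}) :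
    t * x ∈ Submodule.span k {x : R ⊗[k] S | ∃ a ∈ p, ∃ s : S, x = a ⊗ₜ s} := by
  induction hx using Submodule.span_induction with
  | mem x hx =>
    obtain ⟨a, ha, s, rfl⟩ := hx
    induction t using TensorProduct.induction_on with
    | zero => rw [zero_mul]; exact Submodule.zero_mem _
    | tmul r s' =>
      rw [Algebra.TensorProduct.tmul_mul_tmul]
      exact Submodule.subset_span ⟨r * a, p.mul_mem_left r ha, s' * s, rfl⟩
    | add u v hu hv => rw [add_mul]; exact Submodule.add_mem _ hu hv
  | zero => rw [mul_zero]; exact Submodule.zero_mem _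
  | add x y _ _ hx hy => rw [mul_add]; exact Submodule.add_mem _ hx hy
  | smul c x _ hx => rw [mul_smul_comm]; exact Submodule.smul_mem _ c hx

lemma aux_map_le_span (p : Ideal R) (x : R ⊗[k] S)
    (hx : x ∈ Ideal.map (Algebra.TensorProduct.includeLeft : R →ₐ[k] R ⊗[k] S) p) :
    x ∈ Submodule.span k {x : R ⊗[k] S | ∃ a ∈ p, ∃ s : S, x = a ⊗ₜ s} := by
  rw [Ideal.map] at hx
  induction hx using Submodule.span_induction with
  | mem x hx =>
    obtain ⟨a, ha, rfl⟩ := hx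
    exact Submodule.subset_span ⟨a, ha, 1, rfl⟩
  | zero => exact Submodule.zero_mem _
  | add x y _ _ hx hy => exact Submodule.add_mem _ hx hy
  | smul c x _ hx => exact aux_mul_mem_left p c x hx

lemma aux_mul_mem_right (q : Ideal S) (t x : R ⊗[k] S)
    (hx : x ∈ Submodule.span k {x : R ⊗[k] S | ∃ b ∈ q, ∃ r : R, x = r ⊗ₜ b}) :
    t * x ∈ Submodule.span k {x : R ⊗[k] S | ∃ b ∈ q, ∃ r : R, x = r ⊗ₜ b} := by
  induction hx using Submodule.span_induction with
  | mem x hx =>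
    obtain ⟨b, hb, r, rfl⟩ := hx
    induction t using TensorProduct.induction_on with
    | zero => rw [zero_mul]; exact Submodule.zero_mem _
    | tmul r' s' =>
      rw [Algebra.TensorProduct.tmul_mul_tmul]
      exact Submodule.subset_span ⟨s' * b, q.mul_mem_left s' hb, r' * r, rfl⟩
    | add u v hu hv => rw [add_mul]; exact Submodule.add_mem _ hu hv
  | zero => rw [mul_zero]; exact Submodule.zero_mem _
  | add x y _ _ hx hy => rw [mul_add]; exact Submodule.add_mem _ hx hy
  | smul c x _ hx => rw [mul_smul_comm]; exact Submodule.smul_mem _ c hx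

lemma aux_map_le_span_right (q : Ideal S) (x : R ⊗[k] S)
    (hx : x ∈ Ideal.map (Algebra.TensorProduct.includeRight : S →ₐ[k] R ⊗[k] S) q) :
    x ∈ Submodule.span k {x : R ⊗[k] S | ∃ b ∈ q, ∃ r : R, x = r ⊗ₜ b} := by
  rw [Ideal.map] at hx
  induction hx using Submodule.span_induction with
  | mem x hx =>
    obtain ⟨b, hb, rfl⟩ := hx
    exact Submodule.subset_span ⟨b, hb, 1, rfl⟩
  | zero => exact Submodule.zero_mem _
  | add x y _ _ hx hy => exact Submodule.add_mem _ hx hy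
  | smul c x _ hx => exact aux_mul_mem_right q c x hx

/-- Key lemma: given a linear projection `π` with `π m = 0` and `r - π r ∈ m`,
the intersection of the extensions of `m` and `n` to the tensor product is their product. -/
lemma aux_inf_le_mul (π : R →ₗ[k] R) (m : Ideal R) (n : Ideal S)
    (hπm : ∀ a ∈ m, π a = 0) (hπc : ∀ r : R, r - π r ∈ m) :
    (Ideal.map (Algebra.TensorProduct.includeLeft : R →ₐ[k] R ⊗[k] S) m) ⊓
      (Ideal.map (Algebra.TensorProduct.includeRight : S →ₐ[k] R ⊗[k] S) n) ≤
    (Ideal.map (Algebra.TensorProduct.includeLeft : R →ₐ[k] R ⊗[k] S) m) *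
      (Ideal.map (Algebra.TensorProduct.includeRight : S →ₐ[k] R ⊗[k] S) n) := by
  set m' := Ideal.map (Algebra.TensorProduct.includeLeft : R →ₐ[k] R ⊗[k] S) m with hm'
  set n' := Ideal.map (Algebra.TensorProduct.includeRight : S →ₐ[k] R ⊗[k] S) n with hn'
  set Φ : R ⊗[k] S →ₗ[k] R ⊗[k] S := LinearMap.rTensor S π with hΦ
  -- Φ vanishes on the span of pure tensors a ⊗ s with a ∈ m
  have hΦm : ∀ x ∈ Submodule.span k {x : R ⊗[k] S | ∃ a ∈ m, ∃ s : S, x = a ⊗ₜ s},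
      Φ x = 0 := by
    intro x hx
    induction hx using Submodule.span_induction with
    | mem x hx =>
      obtain ⟨a, ha, s, rfl⟩ := hx
      simp [hΦ, hπm a ha]
    | zero => simp
    | add x y _ _ hx hy => simp [map_add, hx, hy]
    | smul c x _ hx => simp [map_smul, hx]
  -- x - Φ x ∈ m' * n' for x in the span of pure tensors r ⊗ b with b ∈ n
  have hΦn : ∀ x ∈ Submodule.span k {x : R ⊗[k] S | ∃ b ∈ n, ∃ r : R, x = r ⊗ₜ b},
      x - Φ x ∈ m' * n' := by
    intro x hx
    induction hx using Submodule.span_induction with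
    | mem x hx =>
      obtain ⟨b, hb, r, rfl⟩ := hx
      have : r ⊗ₜ[k] b - Φ (r ⊗ₜ[k] b) = ((r - π r) ⊗ₜ[k] (1 : S)) * ((1 : R) ⊗ₜ[k] b) := by
        simp [hΦ, sub_tmul, sub_mul, Algebra.TensorProduct.tmul_mul_tmul]
      rw [this]
      exact Ideal.mul_mem_mul (Ideal.mem_map_of_mem _ (hπc r)) (Ideal.mem_map_of_mem _ hb)
    | zero => simp
    | add x y _ _ hx hy =>
      have : x + y - Φ (x + y) = (x - Φ x) + (y - Φ y) := by rw [map_add]; ring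
      rw [this]; exact Ideal.add_mem _ hx hy
    | smul c x _ hx =>
      have : c • x - Φ (c • x) = c • (x - Φ x) := by rw [map_smul, smul_sub]
      rw [this]
      exact Submodule.smul_mem ((m' * n').restrictScalars k) c hx
  intro x hx
  have h := hΦn x (aux_map_le_span_right (k := k) n x hx.2)
  rwa [hΦm x (aux_map_le_span (k := k) m x hx.1), sub_zero] at h

end Aux

theorem fiberProduct_eq_inf
    (k R S : Type*) [Field k] [CommRing R] [Algebra k R] [CommRing S] [Algebra k S]
    (𝒜 : ℕ → Submodule k R) [GradedAlgebra 𝒜] (ℬ : ℕ → Submodule k S) [GradedAlgebra ℬ]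
    -- `R` and `S` are standard graded
    (hA0 : 𝒜 0 = 1) (hA1 : ∀ i : ℕ, 𝒜 (i + 1) = 𝒜 1 * 𝒜 i) (hAfg : Module.Finite k (𝒜 1))
    (hB0 : ℬ 0 = 1) (hB1 : ∀ i : ℕ, ℬ (i + 1) = ℬ 1 * ℬ i) (hBfg : Module.Finite k (ℬ 1))
    -- the graded maximal ideals, assumed nonzero
    (m : Ideal R) (hm : m = (HomogeneousIdeal.irrelevant 𝒜).toIdeal) (hm0 : m ≠ ⊥)
    (n : Ideal S) (hn : n = (HomogeneousIdeal.irrelevant ℬ).toIdeal) (hn0 : n ≠ ⊥)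
    (I : Ideal R) (hIm : I ≤ m ^ 2) (hIhom : I.IsHomogeneous 𝒜)
    (J : Ideal S) (hJn : J ≤ n ^ 2) (hJhom : J.IsHomogeneous ℬ)
    -- the extensions of the various ideals to `T = R ⊗[k] S`
    (I' J' m' n' : Ideal (R ⊗[k] S))
    (hI' : I' = Ideal.map (Algebra.TensorProduct.includeLeft : R →ₐ[k] R ⊗[k] S) I)
    (hJ' : J' = Ideal.map (Algebra.TensorProduct.includeRight : S →ₐ[k] R ⊗[k] S) J)
    (hm' : m' = Ideal.map (Algebra.TensorProduct.includeLeft : R →ₐ[k] R ⊗[k] S) m)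
    (hn' : n' = Ideal.map (Algebra.TensorProduct.includeRight : S →ₐ[k] R ⊗[k] S) n)
    (F : Ideal (R ⊗[k] S)) (hF : F = I' + J' + m' * n') :
    F = (I' + n') ⊓ (J' + m') := by
  -- basic inclusions
  have hIm1 : I ≤ m := hIm.trans (by rw [sq]; exact Ideal.mul_le_left)
  have hJn1 : J ≤ n := hJn.trans (by rw [sq]; exact Ideal.mul_le_left)
  have hI'm' : I' ≤ m' := by rw [hI', hm']; exact Ideal.map_mono hIm1
  have hJ'n' : J' ≤ n' := by rw [hJ', hn']; exact Ideal.map_mono hJn1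
  -- the projection for the grading on R
  have hπm : ∀ a ∈ m, GradedAlgebra.proj 𝒜 0 a = 0 := by
    intro a ha
    rw [hm] at ha
    exact ha
  have hπc : ∀ r : R, r - GradedAlgebra.proj 𝒜 0 r ∈ m := by
    intro r
    rw [hm]
    show GradedRing.proj 𝒜 0 _ = 0
    rw [map_sub]
    have h1 : GradedRing.proj 𝒜 0 (GradedAlgebra.proj 𝒜 0 r) = GradedAlgebra.proj 𝒜 0 r := by
      rw [GradedRing.proj_apply, GradedAlgebra.proj_apply,
        DirectSum.decompose_of_mem_same 𝒜 (SetLike.coe_mem _)]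
    rw [h1]
    rw [GradedRing.proj_apply, GradedAlgebra.proj_apply, sub_self]
  have key : m' ⊓ n' = m' * n' := by
    refine le_antisymm ?_ (le_inf Ideal.mul_le_left Ideal.mul_le_right)
    rw [hm', hn']
    exact aux_inf_le_mul (GradedAlgebra.proj 𝒜 0) m n hπm hπc
  -- forward inclusion
  refine le_antisymm ?_ ?_
  · rw [hF]
    refine sup_le (sup_le ?_ ?_) ?_
    · exact le_inf le_sup_left (hI'm'.trans le_sup_right)
    · exact le_inf (hJ'n'.trans le_sup_right) le_sup_left
    · exact le_inf (Ideal.mul_le_right.trans le_sup_right)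
        (Ideal.mul_le_left.trans le_sup_right)
  · refine le_of_eq ?_
    have h1 : (J' ⊔ m') ⊓ (I' ⊔ n') = J' ⊔ m' ⊓ (I' ⊔ n') :=
      sup_inf_assoc_of_le m' (hJ'n'.trans le_sup_right)
    have h2 : (I' ⊔ n') ⊓ m' = I' ⊔ n' ⊓ m' := sup_inf_assoc_of_le n' hI'm'
    have hfinal : J' ⊔ (I' ⊔ m' * n') = I' + J' + m' * n' := by
      show J' ⊔ (I' ⊔ m' * n') = (I' ⊔ J') ⊔ m' * n'
      rw [sup_left_comm, sup_assoc]
    calc (I' + n') ⊓ (J' + m') = (J' ⊔ m') ⊓ (I' ⊔ n') := inf_comm _ _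
      _ = J' ⊔ (I' ⊔ n') ⊓ m' := by rw [h1, inf_comm]
      _ = J' ⊔ (I' ⊔ n' ⊓ m') := by rw [h2]
      _ = J' ⊔ (I' ⊔ m' * n') := by rw [inf_comm, key]
      _ = I' + J' + m' * n' := hfinal
      _ = F := hF.symm
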